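/- For 0<p1≤t≤1 and μ in [0,1] (with μF(t)+(1-μ)F(p1)>0), every maximizer of the reject revenue curve R^R over [0,1] is at most the monopoly price p*, the unique maximizer of R(p)=p(1-F(p)) on [0,1]. -/

import Mathlib

open MeasureTheory Set Filter

noncomputable section

namespace RepeatedSales

/-- `F` is the CDF of an atomless distribution fully supported on `[0,1]`:
continuous, strictly increasing on `[0,1]`, with `F 0 = 0` and `F 1 = 1`. -/
structure NiceCDF (F : ℝ → ℝ) : Prop where
  cont : Continuous F
  mono : StrictMonoOn F (Icc (0:ℝ) 1)
  zero : F 0 = 0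
  one : F 1 = 1

/-- The (price-posting) revenue curve `R(p) = p (1 - F p)`. -/
def Rcurve (F : ℝ → ℝ) (p : ℝ) : ℝ := p * (1 - F p)

/-- The CDF truncated at `x` from above: `F_{≤x}(v) = min (F v / F x) 1`. -/
def Fle (F : ℝ → ℝ) (x v : ℝ) : ℝ := min (F v / F x) 1

/-- The CDF truncated at `x` from below: `F_{≥x}(v) = max ((F v - F x)/(1 - F x)) 0`. -/
def Fge (F : ℝ → ℝ) (x v : ℝ) : ℝ := max ((F v - F x) / (1 - F x)) 0

/-- Revenue curve of the truncated distribution `F_{≤x}`. -/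
def Rle (F : ℝ → ℝ) (x p : ℝ) : ℝ := p * (1 - Fle F x p)

/-- Revenue curve of the truncated distribution `F_{≥x}`. -/
def Rge (F : ℝ → ℝ) (x p : ℝ) : ℝ := p * (1 - Fge F x p)

/-- Posterior probability of sophistication after a reject. -/
def muR (F : ℝ → ℝ) (μ p1 t : ℝ) : ℝ := μ * F t / (μ * F t + (1 - μ) * F p1)

/-- Posterior probability of sophistication after an accept. -/
def muA (F : ℝ → ℝ) (μ p1 t : ℝ) : ℝ :=
  μ * (1 - F t) / (μ * (1 - F t) + (1 - μ) * (1 - F p1))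

/-- The seller's posterior CDF over values after a first-round reject. -/
def FrejCDF (F : ℝ → ℝ) (μ p1 t v : ℝ) : ℝ :=
  muR F μ p1 t * Fle F t v + (1 - muR F μ p1 t) * Fle F p1 v

/-- The seller's posterior CDF over values after a first-round accept. -/
def FaccCDF (F : ℝ → ℝ) (μ p1 t v : ℝ) : ℝ :=
  muA F μ p1 t * Fge F t v + (1 - muA F μ p1 t) * Fge F p1 v

/-- The second-round revenue curve conditioned on a reject. -/
def Rrej (F : ℝ → ℝ) (μ p1 t p : ℝ) : ℝ := p * (1 - FrejCDF F μ p1 t p)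

/-- The second-round revenue curve conditioned on an accept. -/
def Racc (F : ℝ → ℝ) (μ p1 t p : ℝ) : ℝ := p * (1 - FaccCDF F μ p1 t p)

/-- The (topological) support of a measure on `ℝ`: points all of whose
neighborhoods have positive measure. -/
def msupp (ν : Measure ℝ) : Set ℝ := {x | ∀ U ∈ nhds x, ν U ≠ 0}

/-- A continuation `(p1, p2R, p2A, t)` at sophistication level `μ`:
`p2R`, `p2A` are (random) prices, i.e. probability measures supported in `[0,1]`,
every point of the support of `p2R` (resp. `p2A`) maximizes the reject (resp. accept)
revenue curve over `[0,1]`, and the threshold indifference equation holds.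
The denominators defining the posteriors are assumed positive. -/
structure Continuation (F : ℝ → ℝ) (μ p1 : ℝ) (p2R p2A : Measure ℝ) (t : ℝ) : Prop where
  denR_pos : 0 < μ * F t + (1 - μ) * F p1
  denA_pos : 0 < μ * (1 - F t) + (1 - μ) * (1 - F p1)
  probR : IsProbabilityMeasure p2R
  probA : IsProbabilityMeasure p2A
  suppR01 : msupp p2R ⊆ Icc 0 1
  suppA01 : msupp p2A ⊆ Icc 0 1
  optR : ∀ p ∈ msupp p2R, IsMaxOn (Rrej F μ p1 t) (Icc 0 1) p
  optA : ∀ p ∈ msupp p2A, IsMaxOn (Racc F μ p1 t) (Icc 0 1) p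
  indiff : t - p1 + (∫ x, max (t - x) 0 ∂p2A) = ∫ x, max (t - x) 0 ∂p2R

/-- A continuation with deterministic accept price `p2A ≥ t`. -/
def SophFocused (p2A : Measure ℝ) (t : ℝ) : Prop :=
  ∃ a : ℝ, p2A = Measure.dirac a ∧ t ≤ a

/-- A continuation with deterministic accept price `p2A < t`. -/
def NaiveFocused (p2A : Measure ℝ) (t : ℝ) : Prop :=
  ∃ a : ℝ, p2A = Measure.dirac a ∧ a < t

/-- The seller's expected revenue of a continuation at sophistication `μ`. -/
def sellerRev (F : ℝ → ℝ) (μ p1 t : ℝ) (p2R p2A : Measure ℝ) : ℝ :=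
  μ * (p1 * (1 - F t) + (∫ a, (if a ≤ t then a * (1 - F a) else 0) ∂p2A)
      + ∫ r, r * (F t - F r) ∂p2R)
  + (1 - μ) * (p1 * (1 - F p1) + (∫ a, a * (1 - F a) ∂p2A)
      + ∫ r, (if r ≤ p1 then r * (F p1 - F r) else 0) ∂p2R)

/-- Strict concavity plus maximality at `pstar` forces strict decrease to the
right of `pstar`. -/
lemma rcurve_strict_anti (F : ℝ → ℝ)
    (hcon : StrictConcaveOn ℝ (Icc (0:ℝ) 1) (Rcurve F))
    (pstar : ℝ) (hps_mem : pstar ∈ Icc (0:ℝ) 1)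
    (hps_max : IsMaxOn (Rcurve F) (Icc (0:ℝ) 1) pstar)
    {q p : ℝ} (hq : pstar ≤ q) (hqp : q < p) (hp1 : p ≤ 1) :
    Rcurve F p < Rcurve F q := by
  have hq0 : 0 ≤ q := hps_mem.1.trans hq
  have hqm : q ∈ Icc (0:ℝ) 1 := ⟨hq0, hqp.le.trans hp1⟩
  have hpm : p ∈ Icc (0:ℝ) 1 := ⟨hq0.trans hqp.le, hp1⟩
  rcases eq_or_lt_of_le hq with h | h
  · -- q = pstar
    rw [← h]
    have hne : pstar ≠ p := by rw [h]; exact ne_of_lt hqp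
    have hmid : (1/2 : ℝ) * pstar + (1/2 : ℝ) * p ∈ Icc (0:ℝ) 1 :=
      ⟨by nlinarith [hps_mem.1, hpm.1], by nlinarith [hps_mem.2, hpm.2]⟩
    have hstrict := hcon.2 hps_mem hpm hne (by norm_num : (0:ℝ) < 1/2)
      (by norm_num : (0:ℝ) < 1/2) (by norm_num)
    simp only [smul_eq_mul] at hstrict hmid ⊢
    have hmax2 : Rcurve F ((1/2) * pstar + (1/2) * p) ≤ Rcurve F pstar :=
      hps_max hmid
    linarith
  · -- pstar < q < p
    have hpne : pstar ≠ p := ne_of_lt (h.trans hqp)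
    set a : ℝ := (p - q) / (p - pstar) with ha
    set b : ℝ := (q - pstar) / (p - pstar) with hb
    have hden : 0 < p - pstar := by linarith
    have hapos : 0 < a := div_pos (by linarith) hden
    have hbpos : 0 < b := div_pos (by linarith) hden
    have hab : a + b = 1 := by
      rw [ha, hb]; field_simp; ring
    have hcomb : a • pstar + b • p = q := by
      simp only [smul_eq_mul]
      rw [ha, hb]
      field_simp
      ring
    have hstrict := hcon.2 hps_mem hpm hpne hapos hbpos hab
    rw [hcomb] at hstrict
    simp only [smul_eq_mul] at hstrict
    have hle : Rcurve F p ≤ Rcurve F pstar := hps_max hpm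
    have h1 : a * Rcurve F p ≤ a * Rcurve F pstar :=
      mul_le_mul_of_nonneg_left hle hapos.le
    have h2 : a * Rcurve F p + b * Rcurve F p = Rcurve F p := by
      rw [← add_mul, hab, one_mul]
    linarith

/-- For `0 < p1 ≤ t ≤ 1` and `μ ∈ [0,1]` with
`μ F(t) + (1-μ) F(p1) > 0`, every maximizer of the reject revenue curve `R^R`
over `[0,1]` is at most the monopoly price `p*`, the unique maximizer of
`R(p) = p(1 - F p)` on `[0,1]`. -/
theorem reject_price_le_monopoly_price
    (F : ℝ → ℝ) (hF : NiceCDF F)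
    (hcon : StrictConcaveOn ℝ (Icc (0:ℝ) 1) (Rcurve F))
    (pstar : ℝ) (hps_mem : pstar ∈ Icc (0:ℝ) 1)
    (hps_max : IsMaxOn (Rcurve F) (Icc (0:ℝ) 1) pstar)
    (hps_uniq : ∀ q ∈ Icc (0:ℝ) 1, IsMaxOn (Rcurve F) (Icc (0:ℝ) 1) q → q = pstar)
    (μ p1 t : ℝ) (hμ : μ ∈ Icc (0:ℝ) 1)
    (hp1 : 0 < p1) (hp1t : p1 ≤ t) (ht : t ≤ 1)
    (hden : 0 < μ * F t + (1 - μ) * F p1) :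
    ∀ p ∈ Icc (0:ℝ) 1, IsMaxOn (Rrej F μ p1 t) (Icc (0:ℝ) 1) p → p ≤ pstar := by
  obtain ⟨hμ0, hμ1⟩ := hμ
  intro p hp hmax
  by_contra hcon'
  push_neg at hcon'
  have hlt : pstar < p := hcon'
  -- basic facts
  have hmem0 : (0:ℝ) ∈ Icc (0:ℝ) 1 := ⟨le_refl 0, zero_le_one⟩
  have hmem1 : (1:ℝ) ∈ Icc (0:ℝ) 1 := ⟨zero_le_one, le_refl 1⟩
  have hp1le1 : p1 ≤ 1 := hp1t.trans ht
  have hmemp1 : p1 ∈ Icc (0:ℝ) 1 := ⟨hp1.le, hp1le1⟩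
  have htpos : 0 < t := hp1.trans_le hp1t
  have hmemt : t ∈ Icc (0:ℝ) 1 := ⟨htpos.le, ht⟩
  have hmono : MonotoneOn F (Icc (0:ℝ) 1) := hF.mono.monotoneOn
  have hFp1 : 0 < F p1 := by
    have := hF.mono hmem0 hmemp1 hp1
    simpa [hF.zero] using this
  have hFt : 0 < F t := by
    have := hF.mono hmem0 hmemt htpos
    simpa [hF.zero] using this
  have hFle1 : ∀ x ∈ Icc (0:ℝ) 1, F x ≤ 1 := by
    intro x hx
    have := hmono hx hmem1 hx.2
    simpa [hF.one] using this
  have hFnn : ∀ x ∈ Icc (0:ℝ) 1, 0 ≤ F x := by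
    intro x hx
    have := hmono hmem0 hx hx.1
    simpa [hF.zero] using this
  have hFtle1 : F t ≤ 1 := hFle1 t hmemt
  have hFp1let : F p1 ≤ F t := hmono hmemp1 hmemt hp1t
  set m : ℝ := muR F μ p1 t with hmdef
  have hm0 : 0 ≤ m := div_nonneg (mul_nonneg hμ0 hFt.le) hden.le
  have hm1 : m ≤ 1 := by
    rw [hmdef, muR, div_le_one hden]
    nlinarith [mul_nonneg (by linarith : (0:ℝ) ≤ 1 - μ) hFp1.le]
  -- formula for Rrej
  have hRrej : ∀ x : ℝ, Rrej F μ p1 t x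
      = x * (1 - (m * Fle F t x + (1 - m) * Fle F p1 x)) := by
    intro x; rw [Rrej, FrejCDF, hmdef]
  have hdec : ∀ {q pp : ℝ}, pstar ≤ q → q < pp → pp ≤ 1 →
      Rcurve F pp < Rcurve F q :=
    fun hq hqp hpp1 => rcurve_strict_anti F hcon pstar hps_mem hps_max hq hqp hpp1
  -- Fle evaluation lemmas
  have hFleEq : ∀ x c : ℝ, x ∈ Icc (0:ℝ) 1 → c ∈ Icc (0:ℝ) 1 → x ≤ c → 0 < F c →
      Fle F c x = F x / F c := by
    intro x c hx hc hxc hFc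
    exact min_eq_left ((div_le_one hFc).2 (hmono hx hc hxc))
  have hFleOne : ∀ x c : ℝ, x ∈ Icc (0:ℝ) 1 → c ∈ Icc (0:ℝ) 1 → c ≤ x → 0 < F c →
      Fle F c x = 1 := by
    intro x c hx hc hcx hFc
    exact min_eq_right ((one_le_div hFc).2 (hmono hc hx hcx))
  rcases le_or_gt p p1 with hpp1 | hp1p
  · -- Case 1 : p ≤ p1 ≤ t, linear scaling region
    set c : ℝ := m / F t + (1 - m) / F p1 with hc
    have hc1 : 1 ≤ c := by
      have h1 : m ≤ m / F t := by
        rw [le_div_iff₀ hFt]; nlinarith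
      have h2 : 1 - m ≤ (1 - m) / F p1 := by
        rw [le_div_iff₀ hFp1]
        nlinarith [hFle1 p1 hmemp1]
      rw [hc]; linarith
    have hform : ∀ x : ℝ, x ∈ Icc (0:ℝ) 1 → x ≤ p1 →
        Rrej F μ p1 t x = x * (1 - c * F x) := by
      intro x hx hxp1
      rw [hRrej, hFleEq x t hx hmemt (hxp1.trans hp1t) hFt,
        hFleEq x p1 hx hmemp1 hxp1 hFp1]
      rw [hc]; ring
    have hps_le_p1 : pstar ≤ p1 := hlt.le.trans hpp1
    have hRd : Rcurve F p < Rcurve F pstar := hdec le_rfl hlt hp.2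
    have h1 : Rrej F μ p1 t pstar ≤ Rrej F μ p1 t p := hmax hps_mem
    have e1 : Rrej F μ p1 t pstar = pstar * (1 - c * F pstar) :=
      hform pstar hps_mem hps_le_p1
    have e2 : Rrej F μ p1 t p = p * (1 - c * F p) := hform p hp hpp1
    rw [e1, e2] at h1
    rw [Rcurve, Rcurve] at hRd
    -- pstar*(1-c*F pstar) - p*(1-c*F p) = (c-1)*(p-pstar) + c*gap > 0
    nlinarith [mul_nonneg (by linarith : (0:ℝ) ≤ c - 1) (by linarith : (0:ℝ) ≤ p - pstar),
      mul_pos (by linarith : (0:ℝ) < c) (by linarith : (0:ℝ) < pstar * (1 - F pstar) - p * (1 - F p))]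
  · -- Case 2 : p1 < p
    rcases le_or_gt (Rrej F μ p1 t p) 0 with hle0 | hpos
    · -- Rrej p ≤ 0 but Rrej (p1/2) > 0 : contradiction
      set q0 : ℝ := p1 / 2 with hq0
      have hq0pos : 0 < q0 := by positivity
      have hq0lt : q0 < p1 := by rw [hq0]; linarith
      have hq0mem : q0 ∈ Icc (0:ℝ) 1 := ⟨hq0pos.le, by linarith⟩
      have hFq0lt : F q0 < F p1 := hF.mono hq0mem hmemp1 hq0lt
      have hFq0nn : 0 ≤ F q0 := hFnn q0 hq0mem
      have e1 : Rrej F μ p1 t q0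
          = q0 * (1 - (m * (F q0 / F t) + (1 - m) * (F q0 / F p1))) := by
        rw [hRrej, hFleEq q0 t hq0mem hmemt (by linarith) hFt,
          hFleEq q0 p1 hq0mem hmemp1 hq0lt.le hFp1]
      have huv : F q0 / F t ≤ F q0 / F p1 :=
        div_le_div_of_nonneg_left hFq0nn hFp1 hFp1let
      have hv1 : F q0 / F p1 < 1 := (div_lt_one hFp1).2 hFq0lt
      have hinner : m * (F q0 / F t) + (1 - m) * (F q0 / F p1) < 1 := by
        nlinarith [mul_le_mul_of_nonneg_left huv hm0]
      have hpos0 : 0 < Rrej F μ p1 t q0 := by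
        rw [e1]; exact mul_pos hq0pos (by linarith)
      have h1 : Rrej F μ p1 t q0 ≤ Rrej F μ p1 t p := hmax hq0mem
      linarith
    · -- Rrej p > 0 : hence p < t and m > 0
      have hpt : p < t := by
        by_contra htp
        push_neg at htp
        have e : Rrej F μ p1 t p = 0 := by
          rw [hRrej, hFleOne p t hp hmemt htp hFt,
            hFleOne p p1 hp hmemp1 hp1p.le hFp1]
          ring
        rw [e] at hpos; exact lt_irrefl 0 hpos
      have hform : ∀ x : ℝ, x ∈ Icc (0:ℝ) 1 → p1 ≤ x → x ≤ t →
          Rrej F μ p1 t x = (m / F t) * (Rcurve F x - x * (1 - F t)) := by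
        intro x hx hxl hxr
        rw [hRrej, hFleEq x t hx hmemt hxr hFt,
          hFleOne x p1 hx hmemp1 hxl hFp1, Rcurve]
        field_simp
        ring
      have hmpos : 0 < m := by
        rcases hm0.lt_or_eq with h | h
        · exact h
        · exfalso
          have e : Rrej F μ p1 t p = 0 := by
            rw [hform p hp hp1p.le hpt.le, ← h]
            ring
          rw [e] at hpos; exact lt_irrefl 0 hpos
      set q : ℝ := max pstar p1 with hqdef
      have hqlt : q < p := max_lt hlt hp1p
      have hqps : pstar ≤ q := le_max_left _ _
      have hqp1 : p1 ≤ q := le_max_right _ _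
      have hqmem : q ∈ Icc (0:ℝ) 1 := ⟨hp1.le.trans hqp1, hqlt.le.trans hp.2⟩
      have hRd : Rcurve F p < Rcurve F q := hdec hqps hqlt hp.2
      have e1 : Rrej F μ p1 t q = (m / F t) * (Rcurve F q - q * (1 - F t)) :=
        hform q hqmem hqp1 (by linarith)
      have e2 : Rrej F μ p1 t p = (m / F t) * (Rcurve F p - p * (1 - F t)) :=
        hform p hp hp1p.le hpt.le
      have hgap : Rcurve F p - p * (1 - F t) < Rcurve F q - q * (1 - F t) := by
        nlinarith [mul_nonneg (by linarith : (0:ℝ) ≤ 1 - F t)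
          (by linarith : (0:ℝ) ≤ p - q)]
      have hcoef : 0 < m / F t := div_pos hmpos hFt
      have h1 : Rrej F μ p1 t q ≤ Rrej F μ p1 t p := hmax hqmem
      rw [e1, e2] at h1
      nlinarith

end RepeatedSales
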